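/- Let d ≥ 2 and b > 1 real. Let H = { y ∈ ℝ^d : y₁ + ⋯ + y_d = 0 }, and for 1 ≤ i ≤ d−1 let v⃗_i ∈ ℝ^d be the vector with 1 in position i, −1 in position i+1, and 0 elsewhere; set w⃗_i = b·v⃗_{d−i} − v⃗_i. Then the cone { y ∈ H : (y₁ + ⋯ + y_s) − b·(y_{d+1−s} + ⋯ + y_d) ≥ 0 for all s ∈ {1,…,d−1} } is exactly the convex cone generated by w⃗₁, …, w⃗_{d−1}, i.e. the set of all nonnegative real linear combinations of the w⃗_i. -/

import Mathlib

set_option maxHeartbeats 1000000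


/-- The vector `v⃗_i ∈ ℝ^d` with `1` in position `i`, `−1` in position `i+1`
and `0` elsewhere (coordinates indexed by `{1,…,d} ⊆ ℕ`). -/
noncomputable def vvec (i : ℕ) : ℕ → ℝ :=
  fun j => if j = i then 1 else if j = i + 1 then -1 else 0

/-- The cone `{y ∈ H : (y₁+⋯+y_s) − b(y_{d+1−s}+⋯+y_d) ≥ 0 ∀ s ∈ {1,…,d−1}}`
(inside the hyperplane `H` of vectors supported on `{1,…,d}` with zero
coordinate sum) is the convex cone generated by the vectors
`w⃗_i = b·v⃗_{d−i} − v⃗_i`, `1 ≤ i ≤ d−1`. -/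
lemma sum_vvec (i : ℕ) (T : Finset ℕ) :
    ∑ j ∈ T, vvec i j = (if i ∈ T then (1:ℝ) else 0) + (if i + 1 ∈ T then (-1:ℝ) else 0) := by
  have h : ∀ j ∈ T, vvec i j = (if j = i then (1:ℝ) else 0) + (if j = i + 1 then (-1:ℝ) else 0) := by
    intro j _
    unfold vvec
    split_ifs <;> first | ring1 | (exfalso; omega)
  rw [Finset.sum_congr rfl h, Finset.sum_add_distrib,
    Finset.sum_ite_eq' T i (fun _ => (1:ℝ)), Finset.sum_ite_eq' T (i+1) (fun _ => (-1:ℝ))]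

lemma comb_apply (d : ℕ) (b : ℝ) (lam : ℕ → ℝ) (j : ℕ) :
    (∑ i ∈ Finset.Icc 1 (d-1), lam i • (b • vvec (d-i) - vvec i)) j =
    ∑ i ∈ Finset.Icc 1 (d-1), lam i * (b * vvec (d-i) j - vvec i j) := by
  rw [Finset.sum_apply]
  refine Finset.sum_congr rfl fun i _ => ?_
  simp [smul_eq_mul]

lemma comb_sum (d : ℕ) (b : ℝ) (lam : ℕ → ℝ) (T : Finset ℕ) :
    ∑ j ∈ T, (∑ i ∈ Finset.Icc 1 (d-1), lam i • (b • vvec (d-i) - vvec i)) j =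
    ∑ i ∈ Finset.Icc 1 (d-1), lam i *
      (b * ((if d-i ∈ T then (1:ℝ) else 0) + (if d-i+1 ∈ T then (-1:ℝ) else 0))
        - ((if i ∈ T then (1:ℝ) else 0) + (if i+1 ∈ T then (-1:ℝ) else 0))) := by
  simp only [comb_apply]
  rw [Finset.sum_comm]
  refine Finset.sum_congr rfl fun i _ => ?_
  rw [← Finset.mul_sum, Finset.sum_sub_distrib, ← Finset.mul_sum, sum_vvec, sum_vvec]

lemma comb_support (d : ℕ) (b : ℝ) (lam : ℕ → ℝ) (j : ℕ) (hj : j ∉ Set.Icc 1 d) :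
    (∑ i ∈ Finset.Icc 1 (d-1), lam i • (b • vvec (d-i) - vvec i)) j = 0 := by
  rw [comb_apply]
  apply Finset.sum_eq_zero
  intro i hi
  rw [Finset.mem_Icc] at hi
  simp only [Set.mem_Icc, not_and, not_le] at hj
  unfold vvec
  split_ifs <;> first | ring1 | (exfalso; omega)

lemma comb_total (d : ℕ) (hd : 2 ≤ d) (b : ℝ) (lam : ℕ → ℝ) :
    ∑ j ∈ Finset.Icc 1 d, (∑ i ∈ Finset.Icc 1 (d-1), lam i • (b • vvec (d-i) - vvec i)) j = 0 := by
  rw [comb_sum]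
  apply Finset.sum_eq_zero
  intro i hi
  rw [Finset.mem_Icc] at hi
  simp only [Finset.mem_Icc]
  split_ifs <;> first | ring1 | (exfalso; omega)

lemma Fs_comb (d : ℕ) (hd : 2 ≤ d) (b : ℝ) (lam : ℕ → ℝ) (s : ℕ)
    (hs : s ∈ Finset.Icc 1 (d-1)) :
    (∑ j ∈ Finset.Icc 1 s, (∑ i ∈ Finset.Icc 1 (d-1), lam i • (b • vvec (d-i) - vvec i)) j)
      - b * ∑ j ∈ Finset.Icc (d+1-s) d, (∑ i ∈ Finset.Icc 1 (d-1), lam i • (b • vvec (d-i) - vvec i)) j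
      = (b^2 - 1) * lam s := by
  have hs' := hs
  rw [Finset.mem_Icc] at hs'
  rw [comb_sum, comb_sum, Finset.mul_sum, ← Finset.sum_sub_distrib,
    show (b^2 - 1) * lam s = ∑ i ∈ Finset.Icc 1 (d-1), if i = s then (b^2-1) * lam i else 0 by
      rw [Finset.sum_ite_eq' (Finset.Icc 1 (d-1)) s (fun i => (b^2-1) * lam i), if_pos hs]]
  refine Finset.sum_congr rfl fun i hi => ?_
  rw [Finset.mem_Icc] at hi
  simp only [Finset.mem_Icc]
  split_ifs <;> first | ring1 | (exfalso; omega)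

lemma suffix_eq (f : ℕ → ℝ) (d s : ℕ) (hs : s ≤ d) :
    ∑ j ∈ Finset.Icc (d+1-s) d, f j =
    (∑ j ∈ Finset.Icc 1 d, f j) - ∑ j ∈ Finset.Icc 1 (d-s), f j := by
  have h1 : Finset.Icc 1 (d-s) = Finset.Ioc 0 (d-s) := by rw [← Finset.Icc_add_one_left_eq_Ioc, zero_add]
  have h2 : Finset.Icc (d+1-s) d = Finset.Ioc (d-s) d := by
    rw [← Finset.Icc_add_one_left_eq_Ioc]; congr 1; omega
  have h3 : Finset.Icc 1 d = Finset.Ioc 0 d := by rw [← Finset.Icc_add_one_left_eq_Ioc, zero_add]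
  rw [h1, h2, h3, ← Finset.sum_Ioc_consecutive f (Nat.zero_le (d-s)) (Nat.sub_le d s)]
  ring

/-- If two functions supported on `[1,d]` have zero total sum and equal
`F_s` values for `s ∈ [1,d-1]`, they are equal. -/
lemma eq_of_F (d : ℕ) (hd : 2 ≤ d) (b : ℝ) (hb : 1 < b) (y c : ℕ → ℝ)
    (hy0 : ∀ j, j ∉ Set.Icc 1 d → y j = 0) (hc0 : ∀ j, j ∉ Set.Icc 1 d → c j = 0)
    (hyt : ∑ j ∈ Finset.Icc 1 d, y j = 0) (hct : ∑ j ∈ Finset.Icc 1 d, c j = 0)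
    (hF : ∀ s ∈ Finset.Icc 1 (d-1),
      (∑ j ∈ Finset.Icc 1 s, y j) - b * ∑ j ∈ Finset.Icc (d+1-s) d, y j =
      (∑ j ∈ Finset.Icc 1 s, c j) - b * ∑ j ∈ Finset.Icc (d+1-s) d, c j) :
    y = c := by
  have hb2 : b^2 - 1 ≠ 0 := by nlinarith
  -- E s = prefix difference
  set E : ℕ → ℝ := fun s => (∑ j ∈ Finset.Icc 1 s, y j) - ∑ j ∈ Finset.Icc 1 s, c j with hE
  have hkey : ∀ s ∈ Finset.Icc 1 (d-1), E s + b * E (d-s) = 0 := by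
    intro s hs
    have hs' := hs
    rw [Finset.mem_Icc] at hs'
    have h := hF s hs
    rw [suffix_eq y d s (by omega), suffix_eq c d s (by omega), hyt, hct] at h
    simp only [hE]
    linarith
  have hEzero : ∀ s ∈ Finset.Icc 1 (d-1), E s = 0 := by
    intro s hs
    have hs' := hs
    rw [Finset.mem_Icc] at hs'
    have hds : d - s ∈ Finset.Icc 1 (d-1) := by rw [Finset.mem_Icc]; omega
    have h1 := hkey s hs
    have h2 := hkey (d-s) hds
    have hdds : d - (d - s) = s := by omega
    rw [hdds] at h2
    have : (b^2 - 1) * E s = 0 := by nlinarith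
    exact by
      rcases mul_eq_zero.mp this with h | h
      · exact absurd h hb2
      · exact h
  have hP : ∀ s, s ≤ d → ∑ j ∈ Finset.Icc 1 s, y j = ∑ j ∈ Finset.Icc 1 s, c j := by
    intro s hsd
    rcases Nat.eq_zero_or_pos s with h0 | h0
    · subst h0; simp
    rcases eq_or_lt_of_le hsd with h1 | h1
    · subst h1; rw [hyt, hct]
    · have : E s = 0 := hEzero s (by rw [Finset.mem_Icc]; omega)
      simp only [hE] at this
      linarith
  funext j
  by_cases hj : j ∈ Set.Icc 1 d
  · rw [Set.mem_Icc] at hj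
    have hj1 : j = (j - 1) + 1 := by omega
    have hy : ∑ k ∈ Finset.Icc 1 j, y k = (∑ k ∈ Finset.Icc 1 (j-1), y k) + y j := by
      conv_lhs => rw [hj1]
      rw [Finset.sum_Icc_succ_top (by omega)]
      rw [← hj1]
    have hc : ∑ k ∈ Finset.Icc 1 j, c k = (∑ k ∈ Finset.Icc 1 (j-1), c k) + c j := by
      conv_lhs => rw [hj1]
      rw [Finset.sum_Icc_succ_top (by omega)]
      rw [← hj1]
    have e1 := hP j (by omega)
    have e2 := hP (j-1) (by omega)
    rw [hy, hc] at e1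
    linarith
  · rw [hy0 j hj, hc0 j hj]

theorem reg_dual_cone_generators (d : ℕ) (hd : 2 ≤ d) (b : ℝ) (hb : 1 < b) :
    {y : ℕ → ℝ | (∀ j, j ∉ Set.Icc 1 d → y j = 0) ∧
        (∑ i ∈ Finset.Icc 1 d, y i = 0) ∧
        ∀ s ∈ Finset.Icc 1 (d - 1),
          0 ≤ (∑ i ∈ Finset.Icc 1 s, y i) -
            b * ∑ i ∈ Finset.Icc (d + 1 - s) d, y i} =
      {y : ℕ → ℝ | ∃ lam : ℕ → ℝ, (∀ i, 0 ≤ lam i) ∧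
        y = ∑ i ∈ Finset.Icc 1 (d - 1), lam i • (b • vvec (d - i) - vvec i)} := by
  have hb2 : (0:ℝ) < b^2 - 1 := by nlinarith
  ext y
  simp only [Set.mem_setOf_eq]
  constructor
  · rintro ⟨h1, h2, h3⟩
    refine ⟨fun i => if i ∈ Finset.Icc 1 (d-1) then
        ((∑ j ∈ Finset.Icc 1 i, y j) - b * ∑ j ∈ Finset.Icc (d+1-i) d, y j) / (b^2 - 1)
      else 0, ?_, ?_⟩
    · intro i
      dsimp only
      split_ifs with hi
      · exact div_nonneg (h3 i hi) hb2.le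
      · exact le_refl 0
    · apply eq_of_F d hd b hb _ _ h1
      · intro j hj
        exact comb_support d b _ j hj
      · exact h2
      · exact comb_total d hd b _
      · intro s hs
        rw [Fs_comb d hd b _ s hs, if_pos hs]
        field_simp
  · rintro ⟨lam, hlam0, rfl⟩
    refine ⟨fun j hj => comb_support d b lam j hj, comb_total d hd b lam, fun s hs => ?_⟩
    rw [Fs_comb d hd b lam s hs]
    exact mul_nonneg hb2.le (hlam0 s)
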